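/- Let W̄ ⊆ W and let C : Matrix W̄ W F be the selection matrix with C i j = 1 if j = i and C i j = 0 otherwise. Consider the (W ⊕ W̄) × (W ⊕ X) block matrix F̄ = [[G − I, X̄],[C, 0]]. Then rank(F̄) = rank(T_{W̄, X}) + L, where T_{W̄, X} = C · (I − G)⁻¹ · X̄ and L = |W|. -/
import Mathlib

open Matrix LinearMap

/-- The product submodule is linearly equivalent to the product of the submodules. -/
def submoduleProdEquiv {R M N : Type*} [Semiring R] [AddCommMonoid M] [AddCommMonoid N]
    [Module R M] [Module R N] (p : Submodule R M) (q : Submodule R N) :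
    ↥(p.prod q) ≃ₗ[R] p × q where
  toFun x := (⟨x.1.1, x.2.1⟩, ⟨x.1.2, x.2.2⟩)
  invFun x := ⟨(x.1.1, x.2.1), ⟨x.1.2, x.2.2⟩⟩
  map_add' x y := rfl
  map_smul' c x := rfl
  left_inv x := rfl
  right_inv x := rfl

lemma range_prodMap' {R M N M' N' : Type*} [CommRing R] [AddCommGroup M] [AddCommGroup N]
    [AddCommGroup M'] [AddCommGroup N'] [Module R M] [Module R N] [Module R M'] [Module R N']
    (f : M →ₗ[R] M') (g : N →ₗ[R] N') :
    LinearMap.range (f.prodMap g) = (LinearMap.range f).prod (LinearMap.range g) := by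
  ext ⟨a, b⟩
  simp only [LinearMap.mem_range, Submodule.mem_prod, Prod.ext_iff]
  constructor
  · rintro ⟨⟨x, y⟩, hx, hy⟩
    exact ⟨⟨x, hx⟩, ⟨y, hy⟩⟩
  · rintro ⟨⟨x, hx⟩, ⟨y, hy⟩⟩
    exact ⟨(x, y), hx, hy⟩

lemma finrank_submodule_prod {F M N : Type*} [Field F] [AddCommGroup M] [AddCommGroup N]
    [Module F M] [Module F N] [FiniteDimensional F M] [FiniteDimensional F N]
    (p : Submodule F M) (q : Submodule F N) :
    Module.finrank F ↥(p.prod q) = Module.finrank F p + Module.finrank F q := by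
  rw [(submoduleProdEquiv p q).finrank_eq, Module.finrank_prod]

/-- The rank of a block-diagonal matrix is the sum of the ranks of its blocks. -/
lemma rank_fromBlocks_diag {F m n p q : Type*} [Field F] [Fintype m] [Fintype n] [Fintype p]
    [Fintype q] [DecidableEq n] [DecidableEq q]
    (A : Matrix m n F) (D : Matrix p q F) :
    (Matrix.fromBlocks A 0 0 D).rank = A.rank + D.rank := by
  let e₁ := LinearEquiv.sumArrowLequivProdArrow n q F F
  let e₂ := LinearEquiv.sumArrowLequivProdArrow m p F F
  have key : (Matrix.fromBlocks A 0 0 D).mulVecLin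
      = e₂.symm.toLinearMap ∘ₗ (A.mulVecLin.prodMap D.mulVecLin) ∘ₗ e₁.toLinearMap := by
    ext v i
    rcases i with i | i <;>
      simp [e₁, e₂, Matrix.fromBlocks_mulVec, Matrix.mulVec, dotProduct,
        LinearEquiv.sumArrowLequivProdArrow, Sum.elim_inl, Sum.elim_inr]
  rw [Matrix.rank, key, LinearMap.range_comp, LinearMap.range_comp,
    LinearEquiv.range, Submodule.map_top, range_prodMap']
  rw [LinearEquiv.finrank_map_eq, finrank_submodule_prod]
  rfl

/-- For the selection matrix `C` of the subset `W̄ ⊆ W`, the block matrix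
`F̄ = [[G - I, X̄], [C, 0]]` satisfies
`rank F̄ = rank (C * (I - G)⁻¹ * X̄) + L` with `L = |W|`. -/
theorem stmt2 {F : Type*} [Field F] {W X : Type*} [Fintype W] [Fintype X]
    [DecidableEq W] [DecidableEq X]
    (G : Matrix W W F) (Xb : Matrix W X F)
    (hG : IsUnit (1 - G))
    (Wb : Finset W)
    (C : Matrix ↥Wb W F)
    (hC : ∀ (i : ↥Wb) (j : W), C i j = if j = (i : W) then 1 else 0) :
    (Matrix.fromBlocks (G - 1) Xb C 0).rank
      = (C * (1 - G)⁻¹ * Xb).rank + Fintype.card W := by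
  classical
  set A := G - 1 with hAdef
  have hA : IsUnit A := by
    rw [hAdef, ← neg_sub (1 : Matrix W W F) G]
    exact hG.neg
  have hAdet : IsUnit A.det := (Matrix.isUnit_iff_isUnit_det A).mp hA
  have : Invertible A := hA.invertible
  have hdecomp := Matrix.fromBlocks_eq_of_invertible₁₁ A Xb C (0 : Matrix ↥Wb X F)
  rw [hdecomp]
  have hdet₁ : IsUnit (Matrix.fromBlocks (1 : Matrix W W F) 0 (C * ⅟A)
      (1 : Matrix ↥Wb ↥Wb F)).det := by
    rw [Matrix.det_fromBlocks_zero₁₂]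
    simp
  have hdet₂ : IsUnit (Matrix.fromBlocks (1 : Matrix W W F) (⅟A * Xb) 0
      (1 : Matrix X X F)).det := by
    rw [Matrix.det_fromBlocks_zero₂₁]
    simp
  rw [Matrix.rank_mul_eq_left_of_isUnit_det _ _ hdet₂,
    Matrix.rank_mul_eq_right_of_isUnit_det _ _ hdet₁,
    rank_fromBlocks_diag]
  have hinv : ⅟A = A⁻¹ := Matrix.invOf_eq_nonsing_inv A
  have hS : (0 : Matrix ↥Wb X F) - C * ⅟A * Xb = C * (1 - G)⁻¹ * Xb := by
    rw [hinv]
    have hAinv : A⁻¹ = -(1 - G)⁻¹ := by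
      have h1 : A * -(1 - G)⁻¹ = 1 := by
        rw [hAdef, ← neg_sub (1 : Matrix W W F) G, Matrix.neg_mul, Matrix.mul_neg, neg_neg,
          Matrix.mul_nonsing_inv _ ((Matrix.isUnit_iff_isUnit_det _).mp hG)]
      exact Matrix.inv_eq_right_inv h1
    rw [hAinv]
    simp [Matrix.mul_neg, Matrix.neg_mul]
  rw [hS, Matrix.rank_of_isUnit A hA, add_comm]
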